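/- Let G = G_1 × G_2 × … × G_r be a direct product of groups, let σ be a permutation of {1,…,r}, and for each i let φ_i : G_{σ^{-1}(i)} → G_i be a group homomorphism. Let φ : G → G be the endomorphism given by φ(x_1,…,x_r) = (φ_1(x_{σ^{-1}(1)}), …, φ_r(x_{σ^{-1}(r)})). Write σ = C_1 ∘ … ∘ C_s as a product of disjoint cycles, and for a cycle C_j = (i_1 i_2 … i_m) of σ (so σ(i_t) = i_{t+1} and σ(i_m) = i_1) define φ_{C_j} : G_{i_1} → G_{i_1} as the composition φ_{i_1} ∘ φ_{i_m} ∘ … ∘ φ_{i_3} ∘ φ_{i_2}. Then R(φ) = ∏_{j=1}^{s} R(φ_{C_j}), the product being taken in ℕ_{>0} ∪ {∞}. In particular, if σ is the identity permutation, then R(φ) = ∏_{i=1}^{r} R(φ_i). -/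

import Mathlib

/-- The `φ`-twisted conjugacy relation: `x` and `y` are `φ`-twisted conjugate if
`x = z * y * (φ z)⁻¹` for some `z`. -/
def twistedConj {G : Type*} [Group G] (φ : G →* G) (x y : G) : Prop :=
  ∃ z : G, x = z * y * (φ z)⁻¹

/-- The Reidemeister number `R(φ) ∈ ℕ_{>0} ∪ {∞}` of an endomorphism `φ`: the number of
`φ`-twisted conjugacy classes, with value `⊤` when there are infinitely many. -/
noncomputable def reidemeisterNumber {G : Type*} [Group G] (φ : G →* G) : ℕ∞ :=
  @ite _ (Finite (Quot (twistedConj φ))) (Classical.propDecidable _)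
    ((Nat.card (Quot (twistedConj φ)) : ℕ∞)) ⊤

/-- The canonical isomorphism `G i →* G j` induced by an equality of indices `i = j`. -/
def castMonoidHom {ι : Type*} (G : ι → Type*) [∀ i, Group (G i)] {i j : ι} (h : i = j) :
    G i →* G j where
  toFun x := h ▸ x
  map_one' := by subst h; rfl
  map_mul' x y := by subst h; rfl

/-- The composition `φ_{σ^t b} ∘ ⋯ ∘ φ_{σ² b} ∘ φ_{σ b} : G b →* G (σ^t b)` of the
component maps along the cycle of `σ` through `b`. -/
def cycleComp {r : ℕ} (G : Fin r → Type*) [∀ i, Group (G i)] (σ : Equiv.Perm (Fin r))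
    (φ : ∀ i, G (σ⁻¹ i) →* G i) (b : Fin r) : (t : ℕ) → (G b →* G ((σ ^ t) b))
  | 0 => castMonoidHom G (by simp)
  | t + 1 =>
      ((φ ((σ ^ (t + 1)) b)).comp
        (castMonoidHom G (show (σ ^ t) b = σ⁻¹ ((σ ^ (t + 1)) b) by
          simp [pow_succ', Equiv.Perm.mul_apply]))).comp (cycleComp G σ φ b t)

/-! ### Auxiliary cast lemmas -/

section CastLemmas
variable {ι : Type*} (G : ι → Type*) [∀ i, Group (G i)]

theorem castMonoidHom_self {i : ι} (h : i = i) (x : G i) : castMonoidHom G h x = x := rfl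

theorem castMonoidHom_castMonoidHom {i j k : ι} (h : i = j) (h' : j = k) (x : G i) :
    castMonoidHom G h' (castMonoidHom G h x) = castMonoidHom G (h.trans h') x := by
  subst h; subst h'; rfl

theorem apply_cast_index (z : ∀ i, G i) {a a' : ι} (e : a = a') :
    z a' = castMonoidHom G e (z a) := by subst e; rfl

end CastLemmas

/-! ### The twisted conjugacy relation is an equivalence -/

theorem twistedConj_equivalence {G : Type*} [Group G] (φ : G →* G) :
    Equivalence (twistedConj φ) := by
  constructor
  · exact fun x => ⟨1, by simp⟩
  · rintro x y ⟨z, rfl⟩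
    exact ⟨z⁻¹, by simp [mul_assoc]⟩
  · rintro x y u ⟨z, rfl⟩ ⟨w, rfl⟩
    exact ⟨z * w, by simp [mul_assoc]⟩

/-! ### Counting helper: `enatCard` -/

noncomputable def enatCard (α : Type*) : ℕ∞ :=
  @ite _ (Finite α) (Classical.propDecidable _) ((Nat.card α : ℕ∞)) ⊤

theorem reidemeisterNumber_def {G : Type*} [Group G] (φ : G →* G) :
    reidemeisterNumber φ = enatCard (Quot (twistedConj φ)) := rfl

theorem enatCard_congr {α β : Type*} (e : α ≃ β) : enatCard α = enatCard β := by
  unfold enatCard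
  by_cases h : Finite β
  · haveI := h
    rw [if_pos (Finite.of_equiv β e.symm), if_pos h, Nat.card_congr e]
  · rw [if_neg (fun h' => h (@Finite.of_equiv _ _ h' e)), if_neg h]

theorem enatCard_pi {s : ℕ} (Q : Fin s → Type*) [∀ j, Nonempty (Q j)] :
    enatCard (∀ j, Q j) = ∏ j, enatCard (Q j) := by
  by_cases h : ∀ j, Finite (Q j)
  · haveI := h
    rw [enatCard, if_pos (inferInstance : Finite (∀ j, Q j)), Nat.card_pi, Nat.cast_prod]
    exact Finset.prod_congr rfl fun j _ => by rw [enatCard, if_pos (h j)]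
  · push_neg at h
    obtain ⟨j0, hj0⟩ := h
    haveI : Infinite (Q j0) := hj0
    haveI : Infinite (∀ j, Q j) := Infinite.of_injective
      (fun q => Function.update (fun j => Classical.arbitrary (Q j)) j0 q)
      (fun q q' hqq => by simpa using congrFun hqq j0)
    rw [enatCard, if_neg (not_finite_iff_infinite.mpr inferInstance)]
    have hne : ∀ j, enatCard (Q j) ≠ 0 := by
      intro j
      rw [enatCard]
      split
      · next hf => haveI := hf; exact_mod_cast Nat.card_pos.ne'
      · simp
    have hj0top : enatCard (Q j0) = ⊤ := by
      rw [enatCard, if_neg (not_finite_iff_infinite.mpr inferInstance)]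
    rw [← Finset.mul_prod_erase Finset.univ _ (Finset.mem_univ j0), hj0top]
    exact (WithTop.top_mul (Finset.prod_ne_zero_iff.mpr fun j _ => hne j)).symm

/-! ### Main construction -/

section Main

variable {r : ℕ} (G : Fin r → Type*) [∀ i, Group (G i)] (σ : Equiv.Perm (Fin r))
  (φ : ∀ i, G (σ⁻¹ i) →* G i) {s : ℕ} (b : Fin s → Fin r) (m : Fin s → ℕ)
  (Jt : Fin r → Fin s × ℕ)

theorem phi_cast {i i' : Fin r} (e : i = i') (x : G (σ⁻¹ i)) :
    φ i' (castMonoidHom G (show σ⁻¹ i = σ⁻¹ i' by rw [e]) x) = castMonoidHom G e (φ i x) := by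
  subst e; rfl

theorem pow_pred_apply (B : Fin r) (t : ℕ) (ht : 0 < t) :
    (σ ^ (t - 1)) B = σ⁻¹ ((σ ^ t) B) := by
  obtain ⟨k, rfl⟩ : ∃ k, t = k + 1 := ⟨t - 1, (Nat.succ_pred_eq_of_pos ht).symm⟩
  simp [pow_succ', Equiv.Perm.mul_apply]

theorem cycleComp_pred (B : Fin r) (t : ℕ) (ht : 0 < t)
    (e : (σ ^ (t - 1)) B = σ⁻¹ ((σ ^ t) B)) (v : G B) :
    cycleComp G σ φ B t v
      = φ ((σ ^ t) B) (castMonoidHom G e (cycleComp G σ φ B (t - 1) v)) := by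
  obtain ⟨k, rfl⟩ : ∃ k, t = k + 1 := ⟨t - 1, (Nat.succ_pred_eq_of_pos ht).symm⟩
  rfl

theorem key_comp (hcycle : ∀ j, (σ ^ m j) (b j) = b j) (j : Fin s) (hmj : 0 < m j)
    (e : (σ ^ (m j - 1)) (b j) = σ⁻¹ (b j)) (v : G (b j)) :
    φ (b j) (castMonoidHom G e (cycleComp G σ φ (b j) (m j - 1) v))
      = castMonoidHom G (hcycle j) (cycleComp G σ φ (b j) (m j) v) := by
  rw [cycleComp_pred G σ φ (b j) (m j) hmj (pow_pred_apply σ (b j) (m j) hmj) v,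
    ← phi_cast G σ φ (hcycle j), castMonoidHom_castMonoidHom]

/-- The embedding of per-cycle data into the product group: `g j` is placed at the
base point `b j` and all other coordinates are `1`. -/
def emb (g : ∀ j, G (b j)) : ∀ i, G i := fun i =>
  if h : b (Jt i).1 = i ∧ (Jt i).2 = 0 then castMonoidHom G h.1 (g (Jt i).1) else 1

/-- The normalizing element used to collapse an arbitrary element onto base points. -/
def uX (x : ∀ i, G i) (j : Fin s) : (t : ℕ) → G ((σ ^ t) (b j))
  | 0 => 1
  | t + 1 =>
      φ ((σ ^ (t + 1)) (b j))
          (castMonoidHom G (show (σ ^ t) (b j) = σ⁻¹ ((σ ^ (t + 1)) (b j)) by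
            simp [pow_succ', Equiv.Perm.mul_apply]) (uX x j t))
        * (x ((σ ^ (t + 1)) (b j)))⁻¹

def zX (x : ∀ i, G i) : ∀ i, G i := fun i =>
  if h : (σ ^ (Jt i).2) (b (Jt i).1) = i then
    castMonoidHom G h (uX G σ φ b x (Jt i).1 (Jt i).2) else 1

/-- The element of the product group spreading per-cycle witnesses `w j` along cycles. -/
def zW (w : ∀ j, G (b j)) : ∀ i, G i := fun i =>
  if h : (σ ^ (Jt i).2) (b (Jt i).1) = i then
    castMonoidHom G h (cycleComp G σ φ (b (Jt i).1) (Jt i).2 (w (Jt i).1)) else 1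

theorem cast_apply_congr {i : Fin r} {j j' : Fin s} (e : j = j') (g : ∀ j, G (b j))
    (p : b j = i) (p' : b j' = i) :
    castMonoidHom G p (g j) = castMonoidHom G p' (g j') := by subst e; rfl

theorem cast_pair_congr (u : ∀ (j : Fin s) (t : ℕ), G ((σ ^ t) (b j))) {i : Fin r}
    {p p' : Fin s × ℕ} (e : p = p') (q : (σ ^ p.2) (b p.1) = i)
    (q' : (σ ^ p'.2) (b p'.1) = i) :
    castMonoidHom G q (u p.1 p.2) = castMonoidHom G q' (u p'.1 p'.2) := by subst e; rfl

theorem emb_apply (g : ∀ j, G (b j)) {i : Fin r} {j : Fin s} (hp : Jt i = (j, 0))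
    (h : b j = i) : emb G b Jt g i = castMonoidHom G h (g j) := by
  have hcond : b (Jt i).1 = i ∧ (Jt i).2 = 0 := by rw [hp]; exact ⟨h, rfl⟩
  have h1 : (Jt i).1 = j := by rw [hp]
  unfold emb
  rw [dif_pos hcond]
  exact cast_apply_congr G b h1 g hcond.1 h

theorem emb_apply_ne (g : ∀ j, G (b j)) {i : Fin r} {j : Fin s} {t : ℕ} (hp : Jt i = (j, t))
    (ht : t ≠ 0) : emb G b Jt g i = 1 := by
  have hcond : ¬(b (Jt i).1 = i ∧ (Jt i).2 = 0) := by
    rw [hp]; exact fun hc => ht hc.2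
  unfold emb
  rw [dif_neg hcond]

theorem zX_apply (x : ∀ i, G i) {i : Fin r} {j : Fin s} {t : ℕ} (hp : Jt i = (j, t))
    (h : (σ ^ t) (b j) = i) :
    zX G σ φ b Jt x i = castMonoidHom G h (uX G σ φ b x j t) := by
  have hcond : (σ ^ (Jt i).2) (b (Jt i).1) = i := by rw [hp]; exact h
  unfold zX
  rw [dif_pos hcond]
  exact cast_pair_congr G σ b (fun j t => uX G σ φ b x j t) hp hcond h

theorem zW_apply (w : ∀ j, G (b j)) {i : Fin r} {j : Fin s} {t : ℕ} (hp : Jt i = (j, t))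
    (h : (σ ^ t) (b j) = i) :
    zW G σ φ b Jt w i = castMonoidHom G h (cycleComp G σ φ (b j) t (w j)) := by
  have hcond : (σ ^ (Jt i).2) (b (Jt i).1) = i := by rw [hp]; exact h
  unfold zW
  rw [dif_pos hcond]
  exact cast_pair_congr G σ b (fun j t => cycleComp G σ φ (b j) t (w j)) hp hcond h

end Main

theorem mainFormula {r : ℕ} (G : Fin r → Type*) [∀ i, Group (G i)]
    (σ : Equiv.Perm (Fin r)) (φ : ∀ i, G (σ⁻¹ i) →* G i)
    (Φ : (∀ i, G i) →* (∀ i, G i))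
    (hΦ : ∀ (x : ∀ i, G i) (i : Fin r), Φ x i = φ i (x (σ⁻¹ i)))
    {s : ℕ} (b : Fin s → Fin r) (m : Fin s → ℕ)
    (hm : ∀ j, 1 ≤ m j)
    (hcycle : ∀ j, (σ ^ m j) (b j) = b j)
    (hcover : ∀ i : Fin r, ∃! p : Fin s × ℕ, p.2 < m p.1 ∧ (σ ^ p.2) (b p.1) = i) :
    reidemeisterNumber Φ =
      ∏ j : Fin s, reidemeisterNumber
        ((castMonoidHom G (hcycle j)).comp (cycleComp G σ φ (b j) (m j))) := by
  classical
  set ψ : ∀ j, G (b j) →* G (b j) :=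
    fun j => (castMonoidHom G (hcycle j)).comp (cycleComp G σ φ (b j) (m j)) with hψ
  let Jt : Fin r → Fin s × ℕ := fun i => (hcover i).choose
  have hJ1 : ∀ i, (Jt i).2 < m (Jt i).1 := fun i => (hcover i).choose_spec.1.1
  have hJ2 : ∀ i, (σ ^ (Jt i).2) (b (Jt i).1) = i := fun i => (hcover i).choose_spec.1.2
  have hJu : ∀ j t, t < m j → Jt ((σ ^ t) (b j)) = (j, t) := fun j t ht =>
    ((hcover _).choose_spec.2 (j, t) ⟨ht, rfl⟩).symm
  have equivR := twistedConj_equivalence Φ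
  have equivψ : ∀ j, Equivalence (twistedConj (ψ j)) := fun j => twistedConj_equivalence (ψ j)
  have comp_iff : ∀ x y : ∀ i, G i,
      twistedConj Φ x y ↔ ∃ z : ∀ i, G i, ∀ i, x i = z i * y i * (φ i (z (σ⁻¹ i)))⁻¹ := by
    intro x y
    constructor
    · rintro ⟨z, rfl⟩
      exact ⟨z, fun i => by simp [hΦ z i]⟩
    · rintro ⟨z, hz⟩
      exact ⟨z, funext fun i => by simp [hz i, hΦ z i]⟩
  -- collapsing an arbitrary element onto the base points
  have collapse : ∀ x : ∀ i, G i, ∃ g : ∀ j, G (b j), twistedConj Φ (emb G b Jt g) x := by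
    intro x
    set z := zX G σ φ b Jt x with hzdef
    set y : ∀ i, G i := fun i => z i * x i * (φ i (z (σ⁻¹ i)))⁻¹ with hy
    refine ⟨fun j => y (b j), ?_⟩
    have hyx : twistedConj Φ y x := (comp_iff y x).mpr ⟨z, fun i => rfl⟩
    have hey : emb G b Jt (fun j => y (b j)) = y := by
      funext i
      rcases hp : Jt i with ⟨j, t⟩
      have h2 := hJ2 i; rw [hp] at h2
      have h1 := hJ1 i; rw [hp] at h1
      subst h2
      cases t with
      | zero =>
        have e0 : b j = (σ ^ 0) (b j) := by simp
        exact (emb_apply G b Jt _ hp e0).trans (apply_cast_index G y e0).symm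
      | succ t =>
        rw [emb_apply_ne G b Jt _ hp (Nat.succ_ne_zero t)]
        have e : (σ ^ t) (b j) = σ⁻¹ ((σ ^ (t + 1)) (b j)) := by
          simp [pow_succ', Equiv.Perm.mul_apply]
        have hz1 : z ((σ ^ (t + 1)) (b j)) = uX G σ φ b x j (t + 1) :=
          zX_apply G σ φ b Jt x hp rfl
        have hz2 : z (σ⁻¹ ((σ ^ (t + 1)) (b j))) = castMonoidHom G e (uX G σ φ b x j t) := by
          have hp' : Jt ((σ ^ t) (b j)) = (j, t) := hJu j t (lt_trans (Nat.lt_succ_self t) h1)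
          rw [e] at hp'
          exact zX_apply G σ φ b Jt x hp' e
        rw [hy]
        simp only []
        rw [hz1, hz2]
        have huX : uX G σ φ b x j (t + 1)
            = φ ((σ ^ (t + 1)) (b j)) (castMonoidHom G e (uX G σ φ b x j t))
              * (x ((σ ^ (t + 1)) (b j)))⁻¹ := rfl
        rw [huX]
        group
    rw [hey]; exact hyx
  -- forward direction on base-point data
  have Bfwd : ∀ g h : ∀ j, G (b j), twistedConj Φ (emb G b Jt g) (emb G b Jt h) →
      ∀ j, twistedConj (ψ j) (g j) (h j) := by
    intro g h hgh j
    obtain ⟨z, hz⟩ := (comp_iff _ _).mp hgh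
    have claim : ∀ t, t < m j → z ((σ ^ t) (b j)) = cycleComp G σ φ (b j) t (z (b j)) := by
      intro t
      induction t with
      | zero => exact fun _ => apply_cast_index G z (by simp)
      | succ t ih =>
        intro ht
        have e : (σ ^ t) (b j) = σ⁻¹ ((σ ^ (t + 1)) (b j)) := by
          simp [pow_succ', Equiv.Perm.mul_apply]
        have hp : Jt ((σ ^ (t + 1)) (b j)) = (j, t + 1) := hJu j (t + 1) ht
        have hcomp := hz ((σ ^ (t + 1)) (b j))
        rw [emb_apply_ne G b Jt g hp (Nat.succ_ne_zero t),
          emb_apply_ne G b Jt h hp (Nat.succ_ne_zero t)] at hcomp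
        have hz2 : z (σ⁻¹ ((σ ^ (t + 1)) (b j)))
            = castMonoidHom G e (cycleComp G σ φ (b j) t (z (b j))) := by
          calc z (σ⁻¹ ((σ ^ (t + 1)) (b j)))
              = castMonoidHom G e (z ((σ ^ t) (b j))) := apply_cast_index G z e
            _ = _ := by rw [ih (lt_trans (Nat.lt_succ_self t) ht)]
        rw [hz2] at hcomp
        have hstep : φ ((σ ^ (t + 1)) (b j))
            (castMonoidHom G e (cycleComp G σ φ (b j) t (z (b j))))
            = cycleComp G σ φ (b j) (t + 1) (z (b j)) := rfl
        rw [hstep, mul_one] at hcomp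
        exact mul_inv_eq_one.mp hcomp.symm
    have hp0 : Jt (b j) = (j, 0) := by
      have := hJu j 0 (hm j); simpa using this
    have em : (σ ^ (m j - 1)) (b j) = σ⁻¹ (b j) := by
      have := pow_pred_apply σ (b j) (m j) (hm j)
      rw [hcycle j] at this; exact this
    have hcomp := hz (b j)
    rw [emb_apply G b Jt g hp0 rfl, emb_apply G b Jt h hp0 rfl] at hcomp
    simp only [castMonoidHom_self] at hcomp
    have hz2 : z (σ⁻¹ (b j))
        = castMonoidHom G em (cycleComp G σ φ (b j) (m j - 1) (z (b j))) := by
      calc z (σ⁻¹ (b j))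
          = castMonoidHom G em (z ((σ ^ (m j - 1)) (b j))) := apply_cast_index G z em
        _ = _ := by rw [claim (m j - 1) (Nat.sub_lt (hm j) Nat.one_pos)]
    rw [hz2, key_comp G σ φ b m hcycle j (hm j) em (z (b j))] at hcomp
    exact ⟨z (b j), hcomp⟩
  -- backward direction
  have Bbwd : ∀ g h : ∀ j, G (b j), (∀ j, twistedConj (ψ j) (g j) (h j)) →
      twistedConj Φ (emb G b Jt g) (emb G b Jt h) := by
    intro g h hgh
    choose w hw using hgh
    refine (comp_iff _ _).mpr ⟨zW G σ φ b Jt w, fun i => ?_⟩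
    rcases hp : Jt i with ⟨j, t⟩
    have h2 := hJ2 i; rw [hp] at h2
    have h1 := hJ1 i; rw [hp] at h1
    subst h2
    cases t with
    | zero =>
      rw [show ((σ : Equiv.Perm (Fin r)) ^ 0) (b j) = b j by simp] at hp ⊢
      have em : (σ ^ (m j - 1)) (b j) = σ⁻¹ (b j) := by
        have := pow_pred_apply σ (b j) (m j) (hm j)
        rw [hcycle j] at this; exact this
      rw [emb_apply G b Jt g hp rfl, emb_apply G b Jt h hp rfl]
      simp only [castMonoidHom_self]
      have hz0 : zW G σ φ b Jt w (b j) = w j := by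
        have := zW_apply G σ φ b Jt w hp
          (show ((σ : Equiv.Perm (Fin r)) ^ 0) (b j) = b j by simp)
        rw [this]; rfl
      have hzm : zW G σ φ b Jt w (σ⁻¹ (b j))
          = castMonoidHom G em (cycleComp G σ φ (b j) (m j - 1) (w j)) := by
        have hpm : Jt (σ⁻¹ (b j)) = (j, m j - 1) := by
          have := hJu j (m j - 1) (Nat.sub_lt (hm j) Nat.one_pos)
          rw [em] at this; exact this
        exact zW_apply G σ φ b Jt w hpm em
      rw [hz0, hzm, key_comp G σ φ b m hcycle j (hm j) em (w j)]
      exact hw j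
    | succ t =>
      rw [emb_apply_ne G b Jt g hp (Nat.succ_ne_zero t),
        emb_apply_ne G b Jt h hp (Nat.succ_ne_zero t)]
      have e : (σ ^ t) (b j) = σ⁻¹ ((σ ^ (t + 1)) (b j)) := by
        simp [pow_succ', Equiv.Perm.mul_apply]
      have hz1 : zW G σ φ b Jt w ((σ ^ (t + 1)) (b j)) = cycleComp G σ φ (b j) (t + 1) (w j) :=
        zW_apply G σ φ b Jt w hp rfl
      have hz2 : zW G σ φ b Jt w (σ⁻¹ ((σ ^ (t + 1)) (b j)))
          = castMonoidHom G e (cycleComp G σ φ (b j) t (w j)) := by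
        have hpt : Jt (σ⁻¹ ((σ ^ (t + 1)) (b j))) = (j, t) := by
          have := hJu j t (lt_trans (Nat.lt_succ_self t) h1)
          rw [e] at this; exact this
        exact zW_apply G σ φ b Jt w hpt e
      rw [hz1, hz2]
      have hstep : φ ((σ ^ (t + 1)) (b j))
          (castMonoidHom G e (cycleComp G σ φ (b j) t (w j)))
          = cycleComp G σ φ (b j) (t + 1) (w j) := rfl
      rw [hstep]
      group
  -- quotient equality criterion
  have quotEq : ∀ {α : Type _} (rel : α → α → Prop), Equivalence rel → ∀ a c : α,
      Quot.mk rel a = Quot.mk rel c ↔ rel a c := by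
    intro α rel hrel a c
    exact ⟨fun hh => hrel.eqvGen_iff.mp (Quot.eq.mp hh), fun hh => Quot.sound hh⟩
  -- construct the equivalence of quotients
  let f0 : (∀ i, G i) → ∀ j, Quot (twistedConj (ψ j)) :=
    fun x j => Quot.mk _ ((collapse x).choose j)
  have f0_spec : ∀ x, twistedConj Φ (emb G b Jt ((collapse x).choose)) x :=
    fun x => (collapse x).choose_spec
  have wd : ∀ x y, twistedConj Φ x y → f0 x = f0 y := by
    intro x y hxy
    funext j
    exact Quot.sound
      (Bfwd _ _ (equivR.trans (f0_spec x) (equivR.trans hxy (equivR.symm (f0_spec y)))) j)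
  let F : Quot (twistedConj Φ) → ∀ j, Quot (twistedConj (ψ j)) := Quot.lift f0 wd
  let Gi : (∀ j, Quot (twistedConj (ψ j))) → Quot (twistedConj Φ) :=
    fun q => Quot.mk _ (emb G b Jt (fun j => (q j).out))
  have left : ∀ x, Gi (F (Quot.mk _ x)) = Quot.mk _ x := by
    intro x
    apply Quot.sound
    have h1 : ∀ j, twistedConj (ψ j)
        ((Quot.mk (twistedConj (ψ j)) ((collapse x).choose j)).out) ((collapse x).choose j) :=
      fun j => (quotEq _ (equivψ j) _ _).mp
        (Quot.out_eq (Quot.mk (twistedConj (ψ j)) ((collapse x).choose j)))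
    exact equivR.trans (Bbwd _ _ h1) (f0_spec x)
  have right : ∀ q, F (Gi q) = q := by
    intro q
    funext j
    have h1 := Bfwd _ _ (f0_spec (emb G b Jt (fun j => (q j).out))) j
    calc F (Gi q) j
        = Quot.mk _ ((collapse (emb G b Jt (fun j => (q j).out))).choose j) := rfl
      _ = Quot.mk _ ((q j).out) := Quot.sound h1
      _ = q j := Quot.out_eq _
  have leftAll : ∀ q, Gi (F q) = q := by
    intro q
    obtain ⟨x, rfl⟩ := Quot.exists_rep q
    exact left x
  let E : Quot (twistedConj Φ) ≃ ∀ j, Quot (twistedConj (ψ j)) :=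
    ⟨F, Gi, leftAll, right⟩
  haveI : ∀ j, Nonempty (Quot (twistedConj (ψ j))) := fun j => ⟨Quot.mk _ 1⟩
  calc reidemeisterNumber Φ
      = enatCard (Quot (twistedConj Φ)) := rfl
    _ = enatCard (∀ j, Quot (twistedConj (ψ j))) := enatCard_congr E
    _ = ∏ j, enatCard (Quot (twistedConj (ψ j))) := enatCard_pi _
    _ = ∏ j, reidemeisterNumber (ψ j) := rfl

theorem stmt14 {r : ℕ} (G : Fin r → Type*) [∀ i, Group (G i)]
    (σ : Equiv.Perm (Fin r)) (φ : ∀ i, G (σ⁻¹ i) →* G i)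
    (Φ : (∀ i, G i) →* (∀ i, G i))
    (hΦ : ∀ (x : ∀ i, G i) (i : Fin r), Φ x i = φ i (x (σ⁻¹ i)))
    (s : ℕ) (b : Fin s → Fin r) (m : Fin s → ℕ)
    (hm : ∀ j, 1 ≤ m j)
    (hcycle : ∀ j, (σ ^ m j) (b j) = b j)
    (hcover : ∀ i : Fin r, ∃! p : Fin s × ℕ, p.2 < m p.1 ∧ (σ ^ p.2) (b p.1) = i) :
    reidemeisterNumber Φ =
      ∏ j : Fin s, reidemeisterNumber
        ((castMonoidHom G (hcycle j)).comp (cycleComp G σ φ (b j) (m j))) ∧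
    ∀ hσ : σ = 1, reidemeisterNumber Φ =
      ∏ i : Fin r, reidemeisterNumber
        ((φ i).comp (castMonoidHom G (show i = σ⁻¹ i by simp [hσ]))) := by
  constructor
  · exact mainFormula G σ φ Φ hΦ b m hm hcycle hcover
  · intro hσ
    subst hσ
    have hcycle' : ∀ i : Fin r, (((1 : Equiv.Perm (Fin r))) ^ (1 : ℕ)) (i) = i := by simp
    have hcover' : ∀ i : Fin r,
        ∃! p : Fin r × ℕ, p.2 < 1 ∧ (((1 : Equiv.Perm (Fin r))) ^ p.2) (p.1) = i := by
      intro i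
      refine ⟨(i, 0), ⟨Nat.one_pos, by simp⟩, ?_⟩
      rintro ⟨p1, p2⟩ ⟨hlt, heq⟩
      obtain rfl : p2 = 0 := Nat.lt_one_iff.mp hlt
      simp at heq
      simp [heq]
    have hmain := mainFormula G 1 φ Φ hΦ (fun i => i) (fun _ => 1)
      (fun _ => le_refl 1) hcycle' hcover'
    rw [hmain]
    refine Finset.prod_congr rfl fun i _ => ?_
    congr 1
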